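/- Let Q and Q′ be symmetric positive semi-definite N × N real matrices and λ > 0. Let α be the minimizer of (1/2) αᵀ (Q + λ⁻¹ I) α − 1ᵀ α over the set {α ∈ ℝ^N : α_i ≥ 0 for all i}, and α′ the corresponding minimizer with Q replaced by Q′. Let λ_min denote the minimum eigenvalue of Q + λ⁻¹ I. If ‖Q′ − Q‖_F ≤ ε < λ_min, then ‖α′ − α‖₂ ≤ ε (λ_min − ε)⁻¹ ‖α‖₂. -/

import Mathlib

open Matrix

section SvmAux

private lemma svm_dot_symm {N : ℕ} (H : Matrix (Fin N) (Fin N) ℝ) (hsym : Hᵀ = H)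
    (a d : Fin N → ℝ) : a ⬝ᵥ (H *ᵥ d) = d ⬝ᵥ (H *ᵥ a) := by
  rw [dotProduct_mulVec, ← mulVec_transpose, hsym, dotProduct_comm]

private lemma svm_quad_lower {N : ℕ} (hN : 0 < N) (H : Matrix (Fin N) (Fin N) ℝ)
    (hH : H.IsHermitian) (x : Fin N → ℝ) :
    (⨅ i, hH.eigenvalues i) * (∑ i, x i ^ 2) ≤ x ⬝ᵥ (H *ᵥ x) := by
  haveI : Nonempty (Fin N) := Fin.pos_iff_nonempty.mp hN
  have hsym : Hᵀ = H := by simpa using hH.eq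
  set B := hH.eigenvectorBasis with hB
  set y : EuclideanSpace ℝ (Fin N) := (WithLp.equiv 2 _).symm x with hy
  have hinner : ∀ u v : EuclideanSpace ℝ (Fin N), (inner ℝ u v : ℝ) = ∑ i, u i * v i := by
    intro u v
    simp [PiLp.inner_apply, RCLike.inner_apply, mul_comm]
  set c : Fin N → ℝ := fun i => (inner ℝ y (B i) : ℝ) with hc
  have hci : ∀ i, c i = (inner ℝ y (B i) : ℝ) := fun i => rfl
  have hBi : ∀ i, (inner ℝ (B i) ((WithLp.equiv 2 _).symm (H *ᵥ x)) : ℝ)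
      = hH.eigenvalues i * c i := by
    intro i
    have h := hH.mulVec_eigenvectorBasis i
    set bi : Fin N → ℝ := WithLp.equiv 2 _ (B i) with hbi
    have h1 : (inner ℝ (B i) ((WithLp.equiv 2 _).symm (H *ᵥ x)) : ℝ)
        = bi ⬝ᵥ (H *ᵥ x) := by rw [hinner]; rfl
    have h2 : c i = bi ⬝ᵥ x := by rw [hci i, hinner, dotProduct_comm]; rfl
    rw [h1, dotProduct_mulVec, ← mulVec_transpose, hsym, h2]
    have h3 : H *ᵥ bi = hH.eigenvalues i • bi := h
    rw [h3, smul_dotProduct, smul_eq_mul]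
  have hexp : x ⬝ᵥ (H *ᵥ x) = ∑ i, hH.eigenvalues i * c i ^ 2 := by
    have hs := B.sum_inner_mul_inner y ((WithLp.equiv 2 _).symm (H *ᵥ x))
    have hrhs : (inner ℝ y ((WithLp.equiv 2 _).symm (H *ᵥ x)) : ℝ) = x ⬝ᵥ (H *ᵥ x) := by
      rw [hinner]; rfl
    rw [← hrhs, ← hs]
    refine Finset.sum_congr rfl fun i _ => ?_
    rw [hBi i, hci i]; ring
  have hnorm : ∑ i, x i ^ 2 = ∑ i, c i ^ 2 := by
    have hs := B.sum_inner_mul_inner y y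
    have hlhs : (inner ℝ y y : ℝ) = ∑ i, x i ^ 2 := by
      rw [hinner]; exact Finset.sum_congr rfl fun i _ => (sq (x i)).symm
    rw [← hlhs, ← hs]
    refine Finset.sum_congr rfl fun i _ => ?_
    rw [hci i, real_inner_comm (B i) y]; ring
  rw [hexp, hnorm, Finset.mul_sum]
  refine Finset.sum_le_sum fun i _ => ?_
  exact mul_le_mul_of_nonneg_right
    (ciInf_le (Set.Finite.bddBelow (Set.finite_range _)) i) (sq_nonneg _)

private lemma svm_var_ineq {N : ℕ} (H : Matrix (Fin N) (Fin N) ℝ) (hsym : Hᵀ = H)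
    (hpsd : ∀ v : Fin N → ℝ, 0 ≤ v ⬝ᵥ (H *ᵥ v))
    (a : Fin N → ℝ) (ha : ∀ i, 0 ≤ a i)
    (hmin : ∀ β : Fin N → ℝ, (∀ i, 0 ≤ β i) →
      (1/2) * (a ⬝ᵥ (H *ᵥ a)) - (∑ i, a i) ≤ (1/2) * (β ⬝ᵥ (H *ᵥ β)) - (∑ i, β i))
    (γ : Fin N → ℝ) (hγ : ∀ i, 0 ≤ γ i) :
    ∑ i, (γ i - a i) ≤ (γ - a) ⬝ᵥ (H *ᵥ a) := by
  set d : Fin N → ℝ := γ - a with hd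
  have hdi : ∀ i, d i = γ i - a i := fun i => rfl
  set g : ℝ := d ⬝ᵥ (H *ᵥ a) - ∑ i, d i with hg
  set s : ℝ := d ⬝ᵥ (H *ᵥ d) with hs
  have hs0 : 0 ≤ s := hpsd d
  have key : ∀ t : ℝ, 0 < t → t ≤ 1 → 0 ≤ t * g + t^2/2 * s := by
    intro t ht0 ht1
    have hβpos : ∀ i, 0 ≤ (a + t • d) i := by
      intro i
      have h1 : (a + t • d) i = (1 - t) * a i + t * γ i := by
        simp [hdi i, smul_eq_mul]; ring
      rw [h1]
      have := ha i; have := hγ i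
      nlinarith
    have h2 := hmin (a + t • d) hβpos
    have hexp : (a + t • d) ⬝ᵥ (H *ᵥ (a + t • d))
        = a ⬝ᵥ (H *ᵥ a) + 2*t*(d ⬝ᵥ (H *ᵥ a)) + t^2 * s := by
      have hsymm := svm_dot_symm H hsym a d
      simp only [mulVec_add, mulVec_smul, dotProduct_add, add_dotProduct,
        dotProduct_smul, smul_dotProduct, smul_eq_mul, hsymm, hs]
      ring
    have hsum : ∑ i, (a + t • d) i = (∑ i, a i) + t * ∑ i, d i := by
      simp [Finset.sum_add_distrib, Finset.mul_sum]
    rw [hexp, hsum] at h2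
    have hgdef : d ⬝ᵥ (H *ᵥ a) = g + ∑ i, d i := by rw [hg]; ring
    rw [hgdef] at h2
    nlinarith [h2]
  have hg0 : 0 ≤ g := by
    by_contra hcon
    push_neg at hcon
    set t : ℝ := min 1 (-g / (s + 1)) with ht
    have hs1 : (0:ℝ) < s + 1 := by linarith
    have ht0 : 0 < t := lt_min one_pos (div_pos (by linarith) hs1)
    have ht1 : t ≤ 1 := min_le_left _ _
    have ht2 : t * (s + 1) ≤ -g := by
      have := min_le_right 1 (-g / (s + 1))
      exact (le_div_iff₀ hs1).mp this
    have hk := key t ht0 ht1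
    nlinarith [mul_pos ht0 ht0, mul_le_mul_of_nonneg_left ht2 ht0.le]
  have hfin : ∑ i, d i ≤ d ⬝ᵥ (H *ᵥ a) := by rw [hg] at hg0; linarith
  calc ∑ i, (γ i - a i) = ∑ i, d i := by simp [hdi]
    _ ≤ (γ - a) ⬝ᵥ (H *ᵥ a) := hfin

private lemma svm_cs_bound {N : ℕ} (E : Matrix (Fin N) (Fin N) ℝ) (u v : Fin N → ℝ) :
    |u ⬝ᵥ (E *ᵥ v)| ≤ Real.sqrt (∑ i, ∑ j, E i j ^ 2) * Real.sqrt (∑ j, v j ^ 2)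
      * Real.sqrt (∑ i, u i ^ 2) := by
  have h1 : (u ⬝ᵥ (E *ᵥ v))^2 ≤ (∑ i, u i ^ 2) * (∑ i, ((E *ᵥ v) i)^2) := by
    have h := Finset.sum_mul_sq_le_sq_mul_sq Finset.univ u (fun i => (E *ᵥ v) i)
    have he : u ⬝ᵥ (E *ᵥ v) = ∑ i, u i * (E *ᵥ v) i := rfl
    rw [he]; exact h
  have h2 : ∑ i, ((E *ᵥ v) i)^2 ≤ (∑ i, ∑ j, E i j ^ 2) * (∑ j, v j ^ 2) := by
    rw [Finset.sum_mul]
    refine Finset.sum_le_sum fun i _ => ?_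
    have he : (E *ᵥ v) i = ∑ j, E i j * v j := rfl
    rw [he]; exact Finset.sum_mul_sq_le_sq_mul_sq _ _ _
  have h3 : (u ⬝ᵥ (E *ᵥ v))^2 ≤ (∑ i, u i ^ 2) * ((∑ i, ∑ j, E i j ^ 2) * (∑ j, v j ^ 2)) :=
    h1.trans (mul_le_mul_of_nonneg_left h2 (by positivity))
  calc |u ⬝ᵥ (E *ᵥ v)| = Real.sqrt ((u ⬝ᵥ (E *ᵥ v))^2) := (Real.sqrt_sq_eq_abs _).symm
    _ ≤ Real.sqrt ((∑ i, u i ^ 2) * ((∑ i, ∑ j, E i j ^ 2) * (∑ j, v j ^ 2))) :=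
        Real.sqrt_le_sqrt h3
    _ = Real.sqrt (∑ i, ∑ j, E i j ^ 2) * Real.sqrt (∑ j, v j ^ 2)
        * Real.sqrt (∑ i, u i ^ 2) := by
        rw [Real.sqrt_mul (by positivity), Real.sqrt_mul (by positivity)]; ring

end SvmAux

/-- Robustness of the SVM dual quadratic program: if the perturbed matrix `Q′`
satisfies `‖Q′ − Q‖_F ≤ ε < λ_min(Q + λ⁻¹ I)`, then the minimizers satisfy
`‖α′ − α‖₂ ≤ ε (λ_min − ε)⁻¹ ‖α‖₂`. -/
theorem svm_dual_quadratic_program_perturbation (N : ℕ) (hN : 0 < N)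
    (Q Q' : Matrix (Fin N) (Fin N) ℝ)
    (hQ : Q.PosSemidef) (hQ' : Q'.PosSemidef)
    (lam : ℝ) (hlam : 0 < lam)
    (hH : (Q + lam⁻¹ • (1 : Matrix (Fin N) (Fin N) ℝ)).IsHermitian)
    (α α' : Fin N → ℝ)
    (hαpos : ∀ i, 0 ≤ α i)
    (hαmin : ∀ β : Fin N → ℝ, (∀ i, 0 ≤ β i) →
      (1 / 2) * (α ⬝ᵥ ((Q + lam⁻¹ • 1) *ᵥ α)) - (∑ i, α i)
        ≤ (1 / 2) * (β ⬝ᵥ ((Q + lam⁻¹ • 1) *ᵥ β)) - (∑ i, β i))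
    (hα'pos : ∀ i, 0 ≤ α' i)
    (hα'min : ∀ β : Fin N → ℝ, (∀ i, 0 ≤ β i) →
      (1 / 2) * (α' ⬝ᵥ ((Q' + lam⁻¹ • 1) *ᵥ α')) - (∑ i, α' i)
        ≤ (1 / 2) * (β ⬝ᵥ ((Q' + lam⁻¹ • 1) *ᵥ β)) - (∑ i, β i))
    (ε : ℝ)
    (hQQ' : Real.sqrt (∑ i, ∑ j, |Q' i j - Q i j| ^ 2) ≤ ε)
    (hε : ε < ⨅ i, hH.eigenvalues i) :
    Real.sqrt (∑ i, |α' i - α i| ^ 2)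
      ≤ ε * ((⨅ i, hH.eigenvalues i) - ε)⁻¹ * Real.sqrt (∑ i, |α i| ^ 2) := by
  set H : Matrix (Fin N) (Fin N) ℝ := Q + lam⁻¹ • 1 with hHdef
  set H' : Matrix (Fin N) (Fin N) ℝ := Q' + lam⁻¹ • 1 with hH'def
  set E : Matrix (Fin N) (Fin N) ℝ := Q' - Q with hEdef
  set m : ℝ := ⨅ i, hH.eigenvalues i with hm
  have hsymH : Hᵀ = H := by simpa using hH.eq
  have hsymH' : H'ᵀ = H' := by
    have h1 : Q'ᵀ = Q' := by simpa using hQ'.1.eq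
    rw [hH'def, transpose_add, h1, transpose_smul, transpose_one]
  -- positive semidefiniteness of the quadratic forms
  have hpsd : ∀ (A : Matrix (Fin N) (Fin N) ℝ), A.PosSemidef →
      ∀ v : Fin N → ℝ, 0 ≤ v ⬝ᵥ ((A + lam⁻¹ • 1) *ᵥ v) := by
    intro A hA v
    have h1 : 0 ≤ v ⬝ᵥ (A *ᵥ v) := by simpa using hA.dotProduct_mulVec_nonneg v
    have h2 : (A + lam⁻¹ • (1 : Matrix (Fin N) (Fin N) ℝ)) *ᵥ v = A *ᵥ v + lam⁻¹ • v := by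
      rw [add_mulVec, smul_mulVec, one_mulVec]
    rw [h2, dotProduct_add, dotProduct_smul, smul_eq_mul]
    have h3 : 0 ≤ v ⬝ᵥ v := by
      have : v ⬝ᵥ v = ∑ i, v i * v i := rfl
      rw [this]
      exact Finset.sum_nonneg fun i _ => mul_self_nonneg _
    have h4 : 0 ≤ lam⁻¹ := by positivity
    nlinarith
  -- variational inequalities
  have VI1 := svm_var_ineq H hsymH (hpsd Q hQ) α hαpos hαmin α' hα'pos
  have VI2 := svm_var_ineq H' hsymH' (hpsd Q' hQ') α' hα'pos hα'min α hαpos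
  set d : Fin N → ℝ := α' - α with hddef
  have hdi : ∀ i, d i = α' i - α i := fun i => rfl
  -- combine the variational inequalities
  have hcomb : d ⬝ᵥ (H' *ᵥ α') ≤ d ⬝ᵥ (H *ᵥ α) := by
    have h1 : α - α' = -d := by rw [hddef]; abel
    rw [h1] at VI2
    have h2 : ∑ i, (α i - α' i) = -∑ i, (α' i - α i) := by
      rw [← Finset.sum_neg_distrib]
      exact Finset.sum_congr rfl fun i _ => by ring
    rw [h2, neg_dotProduct] at VI2
    linarith
  -- quadratic bound
  have hsplit : d ⬝ᵥ (H' *ᵥ d) = d ⬝ᵥ (H' *ᵥ α') - d ⬝ᵥ (H' *ᵥ α) := by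
    have : H' *ᵥ d = H' *ᵥ α' - H' *ᵥ α := by rw [hddef, mulVec_sub]
    rw [this, dotProduct_sub]
  have hHE : H' = H + E := by rw [hH'def, hHdef, hEdef]; abel
  have hq1 : d ⬝ᵥ (H *ᵥ d) ≤ - (d ⬝ᵥ (E *ᵥ α)) - d ⬝ᵥ (E *ᵥ d) := by
    have h1 : d ⬝ᵥ (H' *ᵥ d) = d ⬝ᵥ (H *ᵥ d) + d ⬝ᵥ (E *ᵥ d) := by
      rw [hHE, add_mulVec, dotProduct_add]
    have h2 : d ⬝ᵥ (H' *ᵥ α) = d ⬝ᵥ (H *ᵥ α) + d ⬝ᵥ (E *ᵥ α) := by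
      rw [hHE, add_mulVec, dotProduct_add]
    linarith [h1, h2, hsplit, hcomb]
  -- norms
  set nδ : ℝ := Real.sqrt (∑ i, d i ^ 2) with hnδ
  set nα : ℝ := Real.sqrt (∑ i, α i ^ 2) with hnα
  have hnδ0 : 0 ≤ nδ := Real.sqrt_nonneg _
  have hnα0 : 0 ≤ nα := Real.sqrt_nonneg _
  have hε0 : 0 ≤ ε := le_trans (Real.sqrt_nonneg _) hQQ'
  have hεF : Real.sqrt (∑ i, ∑ j, E i j ^ 2) ≤ ε := by
    have heq : ∀ i j, |Q' i j - Q i j| ^ 2 = E i j ^ 2 := fun i j => by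
      rw [sq_abs]; rfl
    calc Real.sqrt (∑ i, ∑ j, E i j ^ 2)
        = Real.sqrt (∑ i, ∑ j, |Q' i j - Q i j| ^ 2) := by
          congr 1; exact Finset.sum_congr rfl fun i _ =>
            Finset.sum_congr rfl fun j _ => (heq i j).symm
      _ ≤ ε := hQQ'
  have hεF0 : 0 ≤ Real.sqrt (∑ i, ∑ j, E i j ^ 2) := Real.sqrt_nonneg _
  -- Cauchy-Schwarz bounds
  have hb1 : - (d ⬝ᵥ (E *ᵥ α)) ≤ ε * nα * nδ := by
    have h := svm_cs_bound E d α
    have h2 : - (d ⬝ᵥ (E *ᵥ α)) ≤ |d ⬝ᵥ (E *ᵥ α)| := neg_le_abs _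
    have h3 : Real.sqrt (∑ i, ∑ j, E i j ^ 2) * nα * nδ ≤ ε * nα * nδ := by
      have := mul_le_mul_of_nonneg_right (mul_le_mul_of_nonneg_right hεF hnα0) hnδ0
      linarith
    calc - (d ⬝ᵥ (E *ᵥ α)) ≤ |d ⬝ᵥ (E *ᵥ α)| := h2
      _ ≤ Real.sqrt (∑ i, ∑ j, E i j ^ 2) * nα * nδ := h
      _ ≤ ε * nα * nδ := h3
  have hb2 : - (d ⬝ᵥ (E *ᵥ d)) ≤ ε * nδ * nδ := by
    have h := svm_cs_bound E d d
    have h2 : - (d ⬝ᵥ (E *ᵥ d)) ≤ |d ⬝ᵥ (E *ᵥ d)| := neg_le_abs _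
    have h3 : Real.sqrt (∑ i, ∑ j, E i j ^ 2) * nδ * nδ ≤ ε * nδ * nδ := by
      have := mul_le_mul_of_nonneg_right (mul_le_mul_of_nonneg_right hεF hnδ0) hnδ0
      linarith
    calc - (d ⬝ᵥ (E *ᵥ d)) ≤ |d ⬝ᵥ (E *ᵥ d)| := h2
      _ ≤ Real.sqrt (∑ i, ∑ j, E i j ^ 2) * nδ * nδ := h
      _ ≤ ε * nδ * nδ := h3
  -- eigenvalue lower bound
  have hlow : m * nδ^2 ≤ d ⬝ᵥ (H *ᵥ d) := by
    have h := svm_quad_lower hN H hH d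
    have h2 : nδ^2 = ∑ i, d i ^ 2 := Real.sq_sqrt (by positivity)
    rw [h2]; exact h
  -- combine
  have hkey : (m - ε) * nδ^2 ≤ ε * nα * nδ := by nlinarith
  have hmε : 0 < m - ε := by rw [hm] at *; linarith
  -- conclude
  have hgoal : nδ ≤ ε * (m - ε)⁻¹ * nα := by
    rcases eq_or_lt_of_le hnδ0 with h0 | hpos
    · rw [← h0]; positivity
    · have h1 : (m - ε) * nδ ≤ ε * nα := by nlinarith
      rw [mul_comm ε (m - ε)⁻¹, mul_assoc]
      have h2 : nδ ≤ ε * nα / (m - ε) := (le_div_iff₀ hmε).mpr (by linarith)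
      rwa [div_eq_inv_mul] at h2
  have hL : Real.sqrt (∑ i, |α' i - α i| ^ 2) = nδ := by
    rw [hnδ]; congr 1
    exact Finset.sum_congr rfl fun i _ => by rw [sq_abs, hdi i]
  have hR : Real.sqrt (∑ i, |α i| ^ 2) = nα := by
    rw [hnα]; congr 1
    exact Finset.sum_congr rfl fun i _ => by rw [sq_abs]
  rw [hL, hR]
  exact hgoal
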